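/- The quotient of P(p,q) by the equivalence relation f ~ f + m(q+1) (for m ∈ ℤ) is a finite set of cardinality (p+1) · C(p+q+1, p+1), where C denotes the binomial coefficient. -/

import Mathlib

lemma strictMono_gap {n N : ℕ} {g : Fin n → Fin N} (hg : StrictMono g) :
    ∀ (i j : Fin n), i ≤ j → (g i : ℕ) + ((j : ℕ) - (i : ℕ)) ≤ g j := by
  intro i j hij
  obtain ⟨k, hk⟩ : ∃ k : ℕ, (j : ℕ) = (i : ℕ) + k := ⟨(j : ℕ) - i, by omega⟩
  clear hij
  induction k generalizing j with
  | zero => have : j = i := Fin.ext (by omega); subst this; omega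
  | succ k ih =>
    have hjk : (i : ℕ) + k < n := by omega
    have h1 := ih ⟨(i : ℕ) + k, hjk⟩ rfl
    have h2 : g ⟨(i : ℕ) + k, hjk⟩ < g j := hg (by simp [Fin.lt_def]; omega)
    simp at h1 ⊢
    omega

/-- monotone maps `Fin n → Fin (m+1)` correspond to strict mono maps `Fin n → Fin (m+n)`. -/
def monoEquivStrict (n m : ℕ) :
    {f : Fin n → Fin (m + 1) // Monotone f} ≃ {g : Fin n → Fin (m + n) // StrictMono g} where
  toFun f := ⟨fun i => ⟨f.1 i + i, by have := (f.1 i).isLt; have := i.isLt; omega⟩, by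
    intro i j hij
    have := f.2 hij.le
    simp only [Fin.lt_def, Fin.le_def] at *
    omega⟩
  invFun g := ⟨fun i => ⟨g.1 i - i, by
      rcases Nat.eq_zero_or_pos n with h | h
      · exact absurd i.isLt (by omega)
      · have hlast : (i : ℕ) ≤ n - 1 := by have := i.isLt; omega
        have := strictMono_gap g.2 i ⟨n - 1, by omega⟩ (by simp [Fin.le_def]; omega)
        have := (g.1 ⟨n - 1, by omega⟩).isLt
        simp at *
        omega⟩, by
    intro i j hij
    have := strictMono_gap g.2 i j hij
    simp only [Fin.le_def] at *
    omega⟩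
  left_inv f := by ext i; simp
  right_inv g := by
    ext i
    have := strictMono_gap g.2 ⟨0, Nat.pos_of_ne_zero (by rintro rfl; exact absurd i.isLt (by omega))⟩ i (by simp [Fin.le_def])
    simp at *
    omega

def strictEquivFinset (n N : ℕ) :
    {g : Fin n → Fin N // StrictMono g} ≃ {s : Finset (Fin N) // s.card = n} where
  toFun g := ⟨Finset.univ.image g.1, by
    rw [Finset.card_image_of_injective _ g.2.injective, Finset.card_univ, Fintype.card_fin]⟩
  invFun s := ⟨(s.1.orderEmbOfFin s.2 : Fin n → Fin N), (s.1.orderEmbOfFin s.2).strictMono⟩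
  left_inv g := by
    apply Subtype.ext
    exact (Finset.orderEmbOfFin_unique _
      (fun x => Finset.mem_image_of_mem _ (Finset.mem_univ x)) g.2).symm
  right_inv s := by
    apply Subtype.ext
    rw [← Finset.coe_inj, Finset.coe_image, Finset.coe_univ, Set.image_univ,
      Finset.range_orderEmbOfFin]

lemma card_monotone_maps (n m : ℕ) :
    Nat.card {f : Fin n → Fin (m + 1) // Monotone f} = (n + m).choose n := by
  rw [Nat.card_congr ((monoEquivStrict n m).trans (strictEquivFinset n (m + n))),
    Nat.card_eq_fintype_card, Fintype.card_finset_len, Fintype.card_fin, Nat.add_comm m n]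

/-- `ParacyclicHom p q f` says `f : ℤ → ℤ` is monotone and satisfies
`f (i + (p+1)) = f i + (q+1)` for all `i`, i.e. `f ∈ P(p,q)`. -/
def ParacyclicHom (p q : ℕ) (f : ℤ → ℤ) : Prop :=
  Monotone f ∧ ∀ i : ℤ, f (i + ((p : ℤ) + 1)) = f i + ((q : ℤ) + 1)

lemma shift_mul {p q : ℕ} {f : ℤ → ℤ}
    (hf : ∀ i : ℤ, f (i + ((p : ℤ) + 1)) = f i + ((q : ℤ) + 1)) :
    ∀ (m i : ℤ), f (i + m * ((p : ℤ) + 1)) = f i + m * ((q : ℤ) + 1) := by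
  intro m
  induction m using Int.induction_on with
  | zero => simp
  | succ k ih =>
    intro i
    have h1 := hf (i + (k : ℤ) * ((p : ℤ) + 1))
    rw [show i + ((k : ℤ) + 1) * ((p : ℤ) + 1) = (i + (k : ℤ) * ((p : ℤ) + 1)) + ((p : ℤ) + 1)
      by ring, h1, ih]
    ring
  | pred k ih =>
    intro i
    have h1 := hf (i + (-(k : ℤ) - 1) * ((p : ℤ) + 1))
    rw [show i + (-(k : ℤ) - 1) * ((p : ℤ) + 1) + ((p : ℤ) + 1) = i + (-(k : ℤ)) * ((p : ℤ) + 1)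
      by ring, ih] at h1
    linarith
lemma decompose {p q : ℕ} {f : ℤ → ℤ}
    (hf : ∀ i : ℤ, f (i + ((p : ℤ) + 1)) = f i + ((q : ℤ) + 1)) (i : ℤ) :
    f i = f (i % ((p : ℤ) + 1)) + (i / ((p : ℤ) + 1)) * ((q : ℤ) + 1) := by
  have h := shift_mul hf (i / ((p : ℤ) + 1)) (i % ((p : ℤ) + 1))
  rw [show i % ((p : ℤ) + 1) + i / ((p : ℤ) + 1) * ((p : ℤ) + 1) = i by
    rw [mul_comm]; exact Int.emod_add_mul_ediv i _] at h
  exact h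

/-- encode a paracyclic hom by `f 0 mod (q+1)` and the differences `f (j+1) - f 0`. -/
def phi (p q : ℕ) (f : {f : ℤ → ℤ // ParacyclicHom p q f}) :
    Fin (q + 1) × {b : Fin p → Fin (q + 2) // Monotone b} :=
  ⟨⟨(f.1 0 % ((q : ℤ) + 1)).toNat, by
      have h1 := Int.emod_nonneg (f.1 0) (by positivity : ((q : ℤ) + 1) ≠ 0)
      have h2 := Int.emod_lt_of_pos (f.1 0) (by positivity : (0 : ℤ) < (q : ℤ) + 1)
      omega⟩,
   ⟨fun j => ⟨(f.1 ((j : ℤ) + 1) - f.1 0).toNat, by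
      have h1 : f.1 0 ≤ f.1 ((j : ℤ) + 1) := f.2.1 (by positivity)
      have h2 : f.1 ((j : ℤ) + 1) ≤ f.1 ((0 : ℤ) + ((p : ℤ) + 1)) := by
        apply f.2.1; have := j.isLt; omega
      rw [f.2.2 0] at h2
      omega⟩, by
      intro j j' hjj'
      have h : f.1 ((j : ℤ) + 1) ≤ f.1 ((j' : ℤ) + 1) := by
        apply f.2.1
        have : (j : ℕ) ≤ (j' : ℕ) := hjj'
        omega
      simp only [Fin.mk_le_mk, Fin.le_def]
      omega⟩⟩

lemma phi_eq_of_rel {p q : ℕ} (f g : {f : ℤ → ℤ // ParacyclicHom p q f})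
    (h : ∃ m : ℤ, ∀ i : ℤ, g.val i = f.val i + m * ((q : ℤ) + 1)) :
    phi p q f = phi p q g := by
  obtain ⟨m, hm⟩ := h
  unfold phi
  refine Prod.ext (Fin.ext ?_) (Subtype.ext (funext fun j => Fin.ext ?_)) <;> simp only
  · rw [hm 0, Int.add_mul_emod_self_right]
  · rw [hm ((j : ℤ) + 1), hm 0]; ring_nf

lemma rel_of_phi_eq {p q : ℕ} (f g : {f : ℤ → ℤ // ParacyclicHom p q f})
    (h : phi p q f = phi p q g) :
    ∃ m : ℤ, ∀ i : ℤ, g.val i = f.val i + m * ((q : ℤ) + 1) := by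
  have hq : (0 : ℤ) < (q : ℤ) + 1 := by positivity
  obtain ⟨h1, h2⟩ := Prod.mk.injEq .. ▸ h
  -- the residues of f 0 and g 0 agree
  have hmod : f.1 0 % ((q : ℤ) + 1) = g.1 0 % ((q : ℤ) + 1) := by
    have e1 := Int.emod_nonneg (f.1 0) hq.ne'
    have e2 := Int.emod_nonneg (g.1 0) hq.ne'
    have := congrArg (fun x : Fin (q + 1) => (x : ℕ)) h1
    simp only [phi] at this
    omega
  have hdvd : ((q : ℤ) + 1) ∣ (g.1 0 - f.1 0) :=
    Int.dvd_of_emod_eq_zero (by rw [Int.sub_emod, sub_eq_zero.mpr hmod.symm, Int.zero_emod])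
  obtain ⟨m, hm⟩ := hdvd
  refine ⟨m, fun i => ?_⟩
  -- it suffices to compare on {0, ..., p}
  have key : ∀ t : ℤ, 0 ≤ t → t ≤ (p : ℤ) → g.1 t = f.1 t + m * ((q : ℤ) + 1) := by
    intro t ht0 htp
    rcases eq_or_lt_of_le ht0 with ht | ht
    · rw [← ht]; rw [mul_comm] at hm; omega
    · -- t = j + 1 for j : Fin p
      have hjp : (t - 1).toNat < p := by omega
      have hbj := congrFun (congrArg (fun x => (x.1 : Fin p → Fin (q + 2))) h2) ⟨(t - 1).toNat, hjp⟩
      simp only [phi] at hbj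
      have := congrArg (fun x : Fin (q + 2) => (x : ℕ)) hbj
      simp only at this
      have e1 : f.1 0 ≤ f.1 (((⟨(t - 1).toNat, hjp⟩ : Fin p) : ℤ) + 1) := f.2.1 (by positivity)
      have e2 : g.1 0 ≤ g.1 (((⟨(t - 1).toNat, hjp⟩ : Fin p) : ℤ) + 1) := g.2.1 (by positivity)
      have ht' : (((⟨(t - 1).toNat, hjp⟩ : Fin p) : ℤ) + 1) = t := by simp; omega
      rw [ht'] at this e1 e2
      rw [mul_comm] at hm
      omega
  have hf := decompose f.2.2 i
  have hg := decompose g.2.2 i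
  have hp1 : (0 : ℤ) < (p : ℤ) + 1 := by positivity
  have hr0 := Int.emod_nonneg i hp1.ne'
  have hr1 := Int.emod_lt_of_pos i hp1
  rw [hf, hg, key (i % ((p : ℤ) + 1)) hr0 (by omega)]
  ring

def Bfun (p q : ℕ) (b : Fin p → Fin (q + 2)) (t : ℤ) : ℤ :=
  if h : 0 < t ∧ t ≤ (p : ℤ) then ((b ⟨(t - 1).toNat, by omega⟩ : ℕ) : ℤ) else 0

/-- the inverse construction: a function built from a residue `r` and a monotone tuple `b`. -/
noncomputable def build (p q : ℕ) (r : Fin (q + 1)) (b : Fin p → Fin (q + 2)) : ℤ → ℤ :=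
  fun i => (r : ℤ) + Bfun p q b (i % ((p : ℤ) + 1)) + (i / ((p : ℤ) + 1)) * ((q : ℤ) + 1)

lemma emod_ediv_eq (p : ℕ) (i t d : ℤ) (ht0 : 0 ≤ t) (htp : t ≤ (p : ℤ))
    (hi : i = t + d * ((p : ℤ) + 1)) :
    i % ((p : ℤ) + 1) = t ∧ i / ((p : ℤ) + 1) = d := by
  constructor
  · rw [hi, Int.add_mul_emod_self_right, Int.emod_eq_of_lt ht0 (by omega)]
  · rw [hi, Int.add_mul_ediv_right _ _ (by omega : ((p : ℤ) + 1) ≠ 0),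
      Int.ediv_eq_zero_of_lt ht0 (by omega), zero_add]

lemma build_paracyclic (p q : ℕ) (r : Fin (q + 1)) (b : Fin p → Fin (q + 2))
    (hb : Monotone b) : ParacyclicHom p q (build p q r b) := by
  have hp1 : (0 : ℤ) < (p : ℤ) + 1 := by positivity
  constructor
  · apply monotone_int_of_le_succ
    intro i
    set t := i % ((p : ℤ) + 1) with htdef
    set d := i / ((p : ℤ) + 1) with hddef
    have hr0 : 0 ≤ t := Int.emod_nonneg i hp1.ne'
    have hr1 : t < (p : ℤ) + 1 := Int.emod_lt_of_pos i hp1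
    have hi : i = t + d * ((p : ℤ) + 1) := by
      rw [htdef, hddef, mul_comm]; exact (Int.emod_add_mul_ediv i _).symm
    rcases lt_or_ge t (p : ℤ) with hcase | hcase
    · -- next residue is t + 1
      obtain ⟨he, hd⟩ := emod_ediv_eq p (i + 1) (t + 1) d (by omega) (by omega)
        (by linear_combination hi)
      unfold build
      rw [he, hd, ← htdef, ← hddef]
      have hB1 : Bfun p q b (t + 1) = ((b ⟨(t + 1 - 1).toNat, by omega⟩ : ℕ) : ℤ) :=
        dif_pos ⟨by omega, by omega⟩
      rcases eq_or_lt_of_le hr0 with ht0 | ht0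
      · have hB0 : Bfun p q b t = 0 := dif_neg (by omega)
        have : (0 : ℤ) ≤ ((b ⟨(t + 1 - 1).toNat, by omega⟩ : ℕ) : ℤ) := by positivity
        omega
      · have hB0 : Bfun p q b t = ((b ⟨(t - 1).toNat, by omega⟩ : ℕ) : ℤ) :=
          dif_pos ⟨ht0, by omega⟩
        have hble : (b ⟨(t - 1).toNat, by omega⟩ : ℕ) ≤ (b ⟨(t + 1 - 1).toNat, by omega⟩ : ℕ) :=
          hb (by simp only [Fin.mk_le_mk]; omega)
        omega
    · -- t = p, next residue is 0
      have htp : t = (p : ℤ) := by omega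
      obtain ⟨he, hd⟩ := emod_ediv_eq p (i + 1) 0 (d + 1) le_rfl (by omega)
        (by linear_combination hi + htp)
      unfold build
      rw [he, hd, ← htdef, ← hddef]
      have hB0 : Bfun p q b 0 = 0 := dif_neg (by omega)
      have hmul : (d + 1) * ((q : ℤ) + 1) = d * ((q : ℤ) + 1) + ((q : ℤ) + 1) := by ring
      rcases Nat.eq_zero_or_pos p with hp0 | hp0
      · have : Bfun p q b t = 0 := dif_neg (by omega)
        omega
      · have hBt : Bfun p q b t = ((b ⟨(t - 1).toNat, by omega⟩ : ℕ) : ℤ) :=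
          dif_pos ⟨by omega, by omega⟩
        have hub : ((b ⟨(t - 1).toNat, by omega⟩ : ℕ) : ℤ) ≤ (q : ℤ) + 1 := by
          exact_mod_cast Nat.le_of_lt_succ (b _).isLt
        omega
  · intro i
    have hr0 : 0 ≤ i % ((p : ℤ) + 1) := Int.emod_nonneg i hp1.ne'
    have hr1 : i % ((p : ℤ) + 1) < (p : ℤ) + 1 := Int.emod_lt_of_pos i hp1
    have hi : i = i % ((p : ℤ) + 1) + (i / ((p : ℤ) + 1)) * ((p : ℤ) + 1) := by
      rw [mul_comm]; exact (Int.emod_add_mul_ediv i _).symm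
    obtain ⟨he, hd⟩ := emod_ediv_eq p (i + ((p : ℤ) + 1)) (i % ((p : ℤ) + 1))
      (i / ((p : ℤ) + 1) + 1) hr0 (by omega) (by linear_combination hi)
    unfold build
    rw [he, hd]
    ring

lemma phi_build (p q : ℕ) (r : Fin (q + 1)) (b : Fin p → Fin (q + 2)) (hb : Monotone b) :
    phi p q ⟨build p q r b, build_paracyclic p q r b hb⟩ = ⟨r, b, hb⟩ := by
  have hp1 : (0 : ℤ) < (p : ℤ) + 1 := by positivity
  have h0 : build p q r b 0 = (r : ℤ) := by
    obtain ⟨he, hd⟩ := emod_ediv_eq p 0 0 0 le_rfl (by omega) (by ring)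
    unfold build
    rw [he, hd]
    have hB0 : Bfun p q b 0 = 0 := dif_neg (by omega)
    omega
  refine Prod.ext (Fin.ext ?_) (Subtype.ext (funext fun j => Fin.ext ?_)) <;>
    simp only [phi, h0]
  · rw [Int.emod_eq_of_lt (by positivity) (by exact_mod_cast Nat.cast_lt.mpr r.isLt)]
    simp
  · have hj1 : build p q r b ((j : ℤ) + 1) = (r : ℤ) + ((b j : ℕ) : ℤ) := by
      obtain ⟨he, hd⟩ := emod_ediv_eq p ((j : ℤ) + 1) ((j : ℤ) + 1) 0
        (by positivity) (by have := j.isLt; omega) (by ring)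
      unfold build
      rw [he, hd]
      have hBj : Bfun p q b ((j : ℤ) + 1) =
          ((b ⟨((j : ℤ) + 1 - 1).toNat, by have := j.isLt; omega⟩ : ℕ) : ℤ) :=
        dif_pos ⟨by positivity, by have := j.isLt; omega⟩
      rw [hBj]
      have : ((j : ℤ) + 1 - 1).toNat = (j : ℕ) := by omega
      simp only [this]
      ring
    rw [hj1]
    simp

theorem cyclic_homset_card (p q : ℕ) :
    Nat.card (Quot (fun f g : {f : ℤ → ℤ // ParacyclicHom p q f} =>
        ∃ m : ℤ, ∀ i : ℤ, g.val i = f.val i + m * ((q : ℤ) + 1))) =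
      (p + 1) * Nat.choose (p + q + 1) (p + 1) := by
  set psi : Quot (fun f g : {f : ℤ → ℤ // ParacyclicHom p q f} =>
      ∃ m : ℤ, ∀ i : ℤ, g.val i = f.val i + m * ((q : ℤ) + 1)) →
      Fin (q + 1) × {b : Fin p → Fin (q + 2) // Monotone b} :=
    Quot.lift (phi p q) (phi_eq_of_rel) with hpsi
  have hinj : Function.Injective psi := by
    intro x y
    induction x using Quot.ind with | _ f =>
    induction y using Quot.ind with | _ g =>
    intro h
    exact Quot.sound (rel_of_phi_eq f g h)
  have hsurj : Function.Surjective psi := by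
    rintro ⟨r, b, hb⟩
    exact ⟨Quot.mk _ ⟨build p q r b, build_paracyclic p q r b hb⟩, phi_build p q r b hb⟩
  have hmono : Nat.card {b : Fin p → Fin (q + 2) // Monotone b} = (p + q + 1).choose p := by
    have h := card_monotone_maps p (q + 1)
    rw [show p + (q + 1) = p + q + 1 from by omega] at h
    exact h
  rw [Nat.card_eq_of_bijective psi ⟨hinj, hsurj⟩, Nat.card_prod, hmono,
    Nat.card_eq_fintype_card, Fintype.card_fin]
  have h := Nat.choose_succ_right_eq (p + q + 1) p
  rw [show p + q + 1 - p = q + 1 from by omega] at h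
  rw [mul_comm (q + 1), ← h, mul_comm]
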